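/- Let X be a finite nonempty set and 𝓕 a family of nonempty subsets of X containing X and all singletons, with any two intersecting members comparable by inclusion. With the ultrametric d(x,y) = min{|F| : x, y ∈ F ∈ 𝓕} − 1, the family 𝓕 is exactly the set of closed balls of (X, d): a subset B ⊆ X is a closed ball of (X,d) if and only if B ∈ 𝓕. -/

import Mathlib

theorem ballean_eq_family {α : Type*} [Fintype α] [Nonempty α]
    (𝓕 : Set (Set α))
    (hne : ∀ F ∈ 𝓕, F.Nonempty)
    (huniv : Set.univ ∈ 𝓕)
    (hsing : ∀ x : α, {x} ∈ 𝓕)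
    (hcomp : ∀ F₁ ∈ 𝓕, ∀ F₂ ∈ 𝓕, (F₁ ∩ F₂).Nonempty → F₁ ⊆ F₂ ∨ F₂ ⊆ F₁)
    (d : α → α → ℝ)
    (hd : ∀ x y : α,
      d x y = sInf {r : ℝ | ∃ F ∈ 𝓕, x ∈ F ∧ y ∈ F ∧ r = (F.ncard : ℝ)} - 1) :
    ∀ B : Set α, (∃ (c : α) (r : ℝ), 0 ≤ r ∧ B = {x | d x c ≤ r}) ↔ B ∈ 𝓕 := by
  have hpos : ∀ F ∈ 𝓕, 1 ≤ F.ncard := by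
    intro F hF
    exact (Set.ncard_pos (Set.toFinite F)).mpr (hne F hF)
  -- the infimum is attained
  have hattain : ∀ x y : α, ∃ F ∈ 𝓕, x ∈ F ∧ y ∈ F ∧
      d x y = (F.ncard : ℝ) - 1 ∧ ∀ G ∈ 𝓕, x ∈ G → y ∈ G → F.ncard ≤ G.ncard := by
    intro x y
    set S : Set ℝ := {r : ℝ | ∃ F ∈ 𝓕, x ∈ F ∧ y ∈ F ∧ r = (F.ncard : ℝ)} with hS
    have hSne : S.Nonempty :=
      ⟨((Set.univ : Set α).ncard : ℝ), Set.univ, huniv, trivial, trivial, rfl⟩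
    have hSfin : S.Finite := by
      have hsub : S ⊆ (fun F : Set α => (F.ncard : ℝ)) '' Set.univ := by
        rintro r ⟨F, hF, hx, hy, rfl⟩
        exact ⟨F, trivial, rfl⟩
      exact (Set.finite_univ.image _).subset hsub
    have hmem : sInf S ∈ S := hSne.csInf_mem hSfin
    obtain ⟨F, hF, hx, hy, hr⟩ := hmem
    refine ⟨F, hF, hx, hy, by rw [hd, ← hr], ?_⟩
    intro G hG hxG hyG
    have hle : sInf S ≤ (G.ncard : ℝ) := csInf_le hSfin.bddBelow ⟨G, hG, hxG, hyG, rfl⟩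
    rw [hr] at hle
    exact_mod_cast hle
  -- d x y ≤ |G| - 1 whenever x,y ∈ G ∈ 𝓕
  have hupper : ∀ x y : α, ∀ G ∈ 𝓕, x ∈ G → y ∈ G → d x y ≤ (G.ncard : ℝ) - 1 := by
    intro x y G hG hxG hyG
    obtain ⟨F, hF, hx, hy, hdF, hmin⟩ := hattain x y
    rw [hdF]
    have := hmin G hG hxG hyG
    have : (F.ncard : ℝ) ≤ (G.ncard : ℝ) := by exact_mod_cast this
    linarith
  intro B
  constructor
  · rintro ⟨c, r, hr, rfl⟩
    -- take a maximal member of 𝓕 containing c of ncard ≤ r + 1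
    set T : Set (Set α) := {F | F ∈ 𝓕 ∧ c ∈ F ∧ (F.ncard : ℝ) ≤ r + 1} with hT
    have hTne : T.Nonempty := by
      refine ⟨{c}, hsing c, rfl, ?_⟩
      simp only [Set.ncard_singleton, Nat.cast_one]
      linarith
    have hTfin : T.Finite := Set.toFinite T
    obtain ⟨F, hFT, hFmax'⟩ := Set.Finite.exists_maximalFor (fun F : Set α => F.ncard) T hTfin hTne
    have hFmax : ∀ G ∈ T, F.ncard ≤ G.ncard → F.ncard = G.ncard :=
      fun G hG h => le_antisymm h (hFmax' hG h)
    obtain ⟨hF, hcF, hFcard⟩ := hFT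
    have hBF : {x | d x c ≤ r} = F := by
      apply Set.eq_of_subset_of_subset
      · intro x hx
        simp only [Set.mem_setOf_eq] at hx
        obtain ⟨G, hG, hxG, hcG, hdG, hmin⟩ := hattain x c
        have hGcard : (G.ncard : ℝ) ≤ r + 1 := by
          rw [hdG] at hx; linarith
        have hGT : G ∈ T := ⟨hG, hcG, hGcard⟩
        rcases hcomp F hF G hG ⟨c, hcF, hcG⟩ with h | h
        · have hle : F.ncard ≤ G.ncard := Set.ncard_le_ncard h (Set.toFinite G)
          have heq : F.ncard = G.ncard := hFmax G hGT hle
          have : F = G := Set.eq_of_subset_of_ncard_le h heq.ge (Set.toFinite G)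
          rw [this]; exact hxG
        · exact h hxG
      · intro x hx
        simp only [Set.mem_setOf_eq]
        have := hupper x c F hF hx hcF
        linarith
    rw [hBF]; exact hF
  · intro hB
    obtain ⟨c, hcB⟩ := hne B hB
    refine ⟨c, (B.ncard : ℝ) - 1, ?_, ?_⟩
    · have := hpos B hB
      have : (1 : ℝ) ≤ (B.ncard : ℝ) := by exact_mod_cast this
      linarith
    · apply Set.eq_of_subset_of_subset
      · intro x hx
        simp only [Set.mem_setOf_eq]
        exact hupper x c B hB hx hcB
      · intro x hx
        simp only [Set.mem_setOf_eq] at hx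
        obtain ⟨G, hG, hxG, hcG, hdG, hmin⟩ := hattain x c
        have hGcard : G.ncard ≤ B.ncard := by
          rw [hdG] at hx
          have : (G.ncard : ℝ) ≤ (B.ncard : ℝ) := by linarith
          exact_mod_cast this
        rcases hcomp G hG B hB ⟨c, hcG, hcB⟩ with h | h
        · exact h hxG
        · have : B = G := Set.eq_of_subset_of_ncard_le h hGcard (Set.toFinite G)
          rw [this]; exact hxG
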